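/- Let k ≥ 0 and let v_0, v_1, …, v_{k+2} ∈ ℤ² be isotropy data; that is, writing v_i = (m_i, n_i), one has v_0 = −v_{k+2}, the first coordinates satisfy m_0 < m_1 < ⋯ < m_{k+2}, and (n_{i+1}−n_i)(m_i−m_{i−1}) > (n_i−n_{i−1})(m_{i+1}−m_i) for 1 ≤ i ≤ k+1. Let S = {v_0,…,v_{k+2}} ∪ {−v_0,…,−v_{k+2}}, regarded as a subset of ℝ². Then S = −S, S has exactly 2k+4 elements, and every point of S is an extreme point of the convex hull of S; that is, the points v_0, v_1, …, v_{k+2}, −v_1, …, −v_{k+1} are the vertices of a centrally symmetric convex polygon. -/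

import Mathlib

/-! Auxiliary integer lemmas about strictly convex lattice chains. -/

/-- Transitivity of edge cross products for a strictly convex chain. -/
lemma isoT (K : ℕ) (m n : ℕ → ℤ) (hm : ∀ i, i < K → m i < m (i+1))
    (hcr : ∀ i, i + 2 ≤ K →
      0 < (m (i+1) - m i) * (n (i+2) - n (i+1)) - (n (i+1) - n i) * (m (i+2) - m (i+1))) :
    ∀ j i, i < j → j < K →
      0 < (m (i+1) - m i) * (n (j+1) - n j) - (n (i+1) - n i) * (m (j+1) - m j) := by
  intro j
  induction j with
  | zero => omega
  | succ j ih =>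
    intro i hij hjK
    rcases Nat.lt_or_ge i j with hij' | hij'
    · have h1 := ih i hij' (by omega)
      have h2 := hcr j (by omega)
      have d1 : 0 < m (i+1) - m i := by have := hm i (by omega); omega
      have d2 : 0 < m (j+1) - m j := by have := hm j (by omega); omega
      have d3 : 0 < m (j+2) - m (j+1) := by
        have h3 : m (j+1) < m (j+2) := hm (j+1) (by omega); omega
      nlinarith [mul_pos d1 h2, mul_pos d3 h1]
    · have : i = j := by omega
      subst this
      exact hcr i (by omega)

/-- Chord from a vertex lies (weakly) above the outgoing edge direction. -/
lemma isoC1 (K : ℕ) (m n : ℕ → ℤ) (hm : ∀ i, i < K → m i < m (i+1))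
    (hcr : ∀ i, i + 2 ≤ K →
      0 < (m (i+1) - m i) * (n (i+2) - n (i+1)) - (n (i+1) - n i) * (m (i+2) - m (i+1))) :
    ∀ s j, j < s → s ≤ K →
      0 ≤ (m (j+1) - m j) * (n s - n j) - (n (j+1) - n j) * (m s - m j) := by
  intro s
  induction s with
  | zero => omega
  | succ s ih =>
    intro j hjs hsK
    rcases Nat.lt_or_ge j s with hjs' | hjs'
    · have h1 := ih j hjs' (by omega)
      have h2 := isoT K m n hm hcr s j hjs' (by omega)
      have h2' : 0 < (m (j+1) - m j) * (n (s+1) - n s) - (n (j+1) - n j) * (m (s+1) - m s) := h2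
      nlinarith
    · have : j = s := by omega
      subst this
      nlinarith

/-- Chord into a vertex lies (weakly) below the incoming edge direction. -/
lemma isoC2 (K : ℕ) (m n : ℕ → ℤ) (hm : ∀ i, i < K → m i < m (i+1))
    (hcr : ∀ i, i + 2 ≤ K →
      0 < (m (i+1) - m i) * (n (i+2) - n (i+1)) - (n (i+1) - n i) * (m (i+2) - m (i+1))) :
    ∀ d s, s + d + 1 ≤ K →
      0 ≤ (m (s+d+1) - m s) * (n (s+d+1) - n (s+d)) - (n (s+d+1) - n s) * (m (s+d+1) - m (s+d)) := by
  intro d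
  induction d with
  | zero => intro s _; simp only [Nat.add_zero]; nlinarith
  | succ d ih =>
    intro s hK
    have h1 := ih (s+1) (by omega)
    have e1 : s + 1 + d = s + (d + 1) := by omega
    rw [e1] at h1
    have h2 := isoT K m n hm hcr (s + (d+1)) s (by omega) (by omega)
    have h2' : 0 < (m (s+1) - m s) * (n (s+(d+1)+1) - n (s+(d+1))) -
        (n (s+1) - n s) * (m (s+(d+1)+1) - m (s+(d+1))) := h2
    nlinarith

/-- A chord strictly crosses a later edge. -/
lemma isoC3 (K : ℕ) (m n : ℕ → ℤ) (hm : ∀ i, i < K → m i < m (i+1))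
    (hcr : ∀ i, i + 2 ≤ K →
      0 < (m (i+1) - m i) * (n (i+2) - n (i+1)) - (n (i+1) - n i) * (m (i+2) - m (i+1))) :
    ∀ d a c, a + d + 1 ≤ c → c < K →
      0 < (m (a+d+1) - m a) * (n (c+1) - n c) - (n (a+d+1) - n a) * (m (c+1) - m c) := by
  intro d
  induction d with
  | zero => intro a c hac hcK; exact isoT K m n hm hcr c a (by omega) hcK
  | succ d ih =>
    intro a c hac hcK
    have h1 := ih (a+1) c (by omega) hcK
    have e2 : a + 1 + d = a + (d + 1) := by omega
    rw [e2] at h1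
    have h2 := isoT K m n hm hcr c a (by omega) hcK
    nlinarith

/-- Strict convexity of general triples `a < b < c`. -/
lemma isoD (K : ℕ) (m n : ℕ → ℤ) (hm : ∀ i, i < K → m i < m (i+1))
    (hcr : ∀ i, i + 2 ≤ K →
      0 < (m (i+1) - m i) * (n (i+2) - n (i+1)) - (n (i+1) - n i) * (m (i+2) - m (i+1))) :
    ∀ c a b, a < b → b < c → c ≤ K →
      0 < (m b - m a) * (n c - n b) - (n b - n a) * (m c - m b) := by
  intro c
  induction c with
  | zero => omega
  | succ c ih =>
    intro a b hab hbc hcK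
    rcases Nat.lt_or_ge b c with hbc' | hbc'
    · have h1 := ih a b hab hbc' (by omega)
      have h2 := isoC3 K m n hm hcr (b - a - 1) a c (by omega) (by omega)
      have e : a + (b - a - 1) + 1 = b := by omega
      rw [e] at h2
      nlinarith
    · have : b = c := by omega
      subst this
      have h2 := isoC3 K m n hm hcr (b - a - 1) a b (by omega) (by omega)
      have e : a + (b - a - 1) + 1 = b := by omega
      rw [e] at h2
      nlinarith

/-- First coordinates of the isotropy data as a function on `ℕ`. -/
def isoM {k : ℕ} (v : Fin (k + 3) → ℤ × ℤ) : ℕ → ℤ :=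
  fun i => (v ⟨i % (k+3), Nat.mod_lt _ (Nat.succ_pos (k+2))⟩).1

/-- Second coordinates of the isotropy data as a function on `ℕ`. -/
def isoN {k : ℕ} (v : Fin (k + 3) → ℤ × ℤ) : ℕ → ℤ :=
  fun i => (v ⟨i % (k+3), Nat.mod_lt _ (Nat.succ_pos (k+2))⟩).2

lemma isoM_eq {k : ℕ} (v : Fin (k + 3) → ℤ × ℤ) (i : ℕ) (h : i < k + 3) :
    isoM v i = (v ⟨i, h⟩).1 :=
  congrArg (fun t => (v t).1) (Fin.ext (Nat.mod_eq_of_lt h))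

lemma isoN_eq {k : ℕ} (v : Fin (k + 3) → ℤ × ℤ) (i : ℕ) (h : i < k + 3) :
    isoN v i = (v ⟨i, h⟩).2 :=
  congrArg (fun t => (v t).2) (Fin.ext (Nat.mod_eq_of_lt h))

lemma isoM_fin {k : ℕ} (v : Fin (k + 3) → ℤ × ℤ) (t : Fin (k + 3)) :
    isoM v t.val = (v t).1 :=
  isoM_eq v t.val t.isLt

lemma isoN_fin {k : ℕ} (v : Fin (k + 3) → ℤ × ℤ) (t : Fin (k + 3)) :
    isoN v t.val = (v t).2 :=
  isoN_eq v t.val t.isLt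

/-- A point of a finite set at which some linear functional is strictly maximized is an
extreme point of the convex hull. -/
lemma expose_extreme {S : Set (ℝ × ℝ)} (hS : S.Finite) {x : ℝ × ℝ} (hx : x ∈ S)
    (l : (ℝ × ℝ) →ₗ[ℝ] ℝ) (h : ∀ y ∈ S, y ≠ x → l y < l x) :
    x ∈ Set.extremePoints ℝ (convexHull ℝ S) := by
  have hle : ∀ y ∈ convexHull ℝ S, l y ≤ l x := by
    intro y hy
    have hsub : convexHull ℝ S ⊆ {z | l z ≤ l x} :=
      convexHull_min (fun z hz => by
        simp only [Set.mem_setOf_eq]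
        rcases eq_or_ne z x with rfl | hne
        · exact le_rfl
        · exact (h z hz hne).le)
        (by
          intro a ha b hb p q hp hq hpq
          simp only [Set.mem_setOf_eq] at *
          have hl : l (p • a + q • b) = p * l a + q * l b := by
            simp [map_add, map_smul, smul_eq_mul]
          rw [hl]
          calc p * l a + q * l b ≤ p * l x + q * l x :=
                add_le_add (mul_le_mul_of_nonneg_left ha hp) (mul_le_mul_of_nonneg_left hb hq)
            _ = l x := by rw [← add_mul, hpq, one_mul])
    exact hsub hy
  have heq : ∀ y ∈ convexHull ℝ S, l y = l x → y = x := by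
    intro y hy hly
    rw [hS.convexHull_eq] at hy
    obtain ⟨w, hw0, hw1, hwy⟩ := hy
    rw [Finset.centerMass_eq_of_sum_1 _ _ hw1] at hwy
    have hxmem : x ∈ hS.toFinset := hS.mem_toFinset.2 hx
    have hsum : ∑ z ∈ hS.toFinset, w z * (l x - l z) = 0 := by
      have hy' : l y = ∑ z ∈ hS.toFinset, w z * l z := by
        rw [← hwy, map_sum]
        exact Finset.sum_congr rfl fun z _ => by simp [map_smul, smul_eq_mul, id_eq]
      have h2 : ∑ z ∈ hS.toFinset, w z * l x = l x := by
        rw [← Finset.sum_mul, hw1, one_mul]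
      calc ∑ z ∈ hS.toFinset, w z * (l x - l z)
          = (∑ z ∈ hS.toFinset, w z * l x) - ∑ z ∈ hS.toFinset, w z * l z := by
            rw [← Finset.sum_sub_distrib]; exact Finset.sum_congr rfl fun z _ => by ring
        _ = l x - l y := by rw [h2, hy']
        _ = 0 := by rw [hly]; ring
    have hz0 : ∀ z ∈ hS.toFinset, z ≠ x → w z = 0 := by
      intro z hz hzx
      have hnn : ∀ u ∈ hS.toFinset, 0 ≤ w u * (l x - l u) := fun u hu =>
        mul_nonneg (hw0 u (hS.mem_toFinset.1 hu))
          (sub_nonneg.2 (hle u (subset_convexHull ℝ S (hS.mem_toFinset.1 hu))))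
      have hterm := (Finset.sum_eq_zero_iff_of_nonneg hnn).1 hsum z hz
      have hlt : 0 < l x - l z := sub_pos.2 (h z (hS.mem_toFinset.1 hz) hzx)
      by_contra hw
      have hwpos : 0 < w z := lt_of_le_of_ne (hw0 z (hS.mem_toFinset.1 hz)) (Ne.symm hw)
      nlinarith
    have hwx : w x = 1 := by
      rw [← hw1, Finset.sum_eq_single x (fun z hz hzx => hz0 z hz hzx)
        (fun hxx => absurd hxmem hxx)]
    rw [← hwy, Finset.sum_eq_single x (fun z hz hzx => by rw [hz0 z hz hzx, zero_smul])
      (fun hxx => absurd hxmem hxx), hwx, one_smul, id_eq]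
  refine ⟨subset_convexHull ℝ S hx, ?_⟩
  intro a ha b hb hseg
  obtain ⟨p, q, hp, hq, hpq, hx'⟩ := hseg
  have hla : l a ≤ l x := hle a ha
  have hlb : l b ≤ l x := hle b hb
  have hlx : p * l a + q * l b = l x := by
    rw [← hx']; simp [map_add, map_smul, smul_eq_mul]
  have hpql : p * l x + q * l x = l x := by rw [← add_mul, hpq, one_mul]
  have hla' : l a = l x := by
    by_contra hcon
    have hcon' : l a < l x := lt_of_le_of_ne hla hcon
    linarith [mul_lt_mul_of_pos_left hcon' hp, mul_le_mul_of_nonneg_left hlb hq.le]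
  have hlb' : l b = l x := by
    by_contra hcon
    have hcon' : l b < l x := lt_of_le_of_ne hlb hcon
    linarith [mul_lt_mul_of_pos_left hcon' hq, mul_le_mul_of_nonneg_left hla hp.le]
  exact heq a ha hla'

/-- The symmetrized set of isotropy vectors, regarded as a subset of `ℝ²`:
the image of `{v_0, …, v_{k+2}} ∪ {−v_0, …, −v_{k+2}}` in `ℝ × ℝ`. -/
def symSet {k : ℕ} (v : Fin (k + 3) → ℤ × ℤ) : Set (ℝ × ℝ) :=
  (fun p : ℤ × ℤ => ((p.1 : ℝ), (p.2 : ℝ))) '' (Set.range v ∪ -Set.range v)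

/-- Isotropy data `v_0, …, v_{k+2}` of a compact toric anti-self-dual Einstein orbifold
give the vertices of a centrally symmetric convex polygon: the symmetrized set `S` satisfies
`S = −S`, has exactly `2k+4` elements, and every point of `S` is an extreme point of the
convex hull of `S`. -/
theorem stmt5 (k : ℕ) (v : Fin (k + 3) → ℤ × ℤ)
    (hsym : v 0 = -v (Fin.last (k + 2)))
    (hmono : StrictMono fun i : Fin (k + 3) => (v i).1)
    (hconv : ∀ (i : ℕ) (h1 : 1 ≤ i) (h2 : i ≤ k + 1),
      ((v ⟨i + 1, by omega⟩).2 - (v ⟨i, by omega⟩).2) *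
          ((v ⟨i, by omega⟩).1 - (v ⟨i - 1, by omega⟩).1) >
        ((v ⟨i, by omega⟩).2 - (v ⟨i - 1, by omega⟩).2) *
          ((v ⟨i + 1, by omega⟩).1 - (v ⟨i, by omega⟩).1)) :
    symSet v = -symSet v ∧ (symSet v).ncard = 2 * k + 4 ∧
      ∀ x ∈ symSet v, x ∈ Set.extremePoints ℝ (convexHull ℝ (symSet v)) := by
  have hvinj : Function.Injective v := fun a b hab => hmono.injective (congrArg Prod.fst hab)
  set F : ℤ × ℤ → ℝ × ℝ := fun p : ℤ × ℤ => ((p.1 : ℝ), (p.2 : ℝ)) with hFdef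
  have hSdef : symSet v = F '' (Set.range v ∪ -Set.range v) := rfl
  have hFneg : ∀ p : ℤ × ℤ, F (-p) = -F p := by
    intro p; simp [hFdef, Prod.ext_iff]
  have hFinj : Function.Injective F := by
    intro p q hpq
    simp only [hFdef, Prod.ext_iff, Int.cast_injective.eq_iff] at hpq
    exact Prod.ext hpq.1 hpq.2
  -- Part 1 : central symmetry
  have hnegmem : ∀ x ∈ symSet v, -x ∈ symSet v := by
    rintro x ⟨p, hp, rfl⟩
    refine ⟨-p, ?_, hFneg p⟩
    rcases hp with hp | hp
    · exact Or.inr (by simpa using hp)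
    · exact Or.inl (by simpa using hp)
  have hpart1 : symSet v = -symSet v := by
    ext x
    simp only [Set.mem_neg]
    exact ⟨fun hx => hnegmem x hx, fun hx => by simpa using hnegmem (-x) hx⟩
  -- basic index bookkeeping
  have hK3 : k + 2 < k + 3 := by omega
  have h03 : 0 < k + 3 := by omega
  have hlastmk : (⟨k + 2, hK3⟩ : Fin (k + 3)) = Fin.last (k + 2) := rfl
  have hzeromk : (⟨0, h03⟩ : Fin (k + 3)) = 0 := Fin.ext (by simp)
  have hmlt : ∀ i, i < k + 2 → isoM v i < isoM v (i+1) := by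
    intro i hi
    have h1 : i + 1 < k + 3 := by omega
    have h0 : i < k + 3 := by omega
    rw [isoM_eq v i h0, isoM_eq v (i+1) h1]
    exact hmono (Fin.mk_lt_mk.2 (by omega))
  have hcr : ∀ i, i + 2 ≤ k + 2 →
      0 < (isoM v (i+1) - isoM v i) * (isoN v (i+2) - isoN v (i+1)) -
        (isoN v (i+1) - isoN v i) * (isoM v (i+2) - isoM v (i+1)) := by
    intro i hi
    have h2 : i + 2 < k + 3 := by omega
    have h1 : i + 1 < k + 3 := Nat.lt_of_succ_lt h2
    have h0 : i < k + 3 := Nat.lt_of_succ_lt h1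
    have h := hconv (i+1) (by omega) (by omega)
    simp only [Nat.add_sub_cancel] at h
    rw [isoM_eq v (i+1) h1, isoM_eq v i h0, isoM_eq v (i+2) h2,
      isoN_eq v (i+1) h1, isoN_eq v i h0, isoN_eq v (i+2) h2]
    linarith [h]
  have hmono' : ∀ a b : ℕ, a < b → b ≤ k + 2 → isoM v a < isoM v b := by
    intro a b hab hb
    have hb' : b < k + 3 := by omega
    have ha' : a < k + 3 := by omega
    rw [isoM_eq v a ha', isoM_eq v b hb']
    exact hmono (Fin.mk_lt_mk.2 hab)
  have hsm : isoM v 0 = -isoM v (k+2) := by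
    rw [isoM_eq v 0 h03, isoM_eq v (k+2) hK3, hlastmk, hzeromk]
    rw [hsym]; simp
  have hsn : isoN v 0 = -isoN v (k+2) := by
    rw [isoN_eq v 0 h03, isoN_eq v (k+2) hK3, hlastmk, hzeromk]
    rw [hsym]; simp
  have hD := isoD (k+2) (isoM v) (isoN v) hmlt hcr
  have hF1 : ∀ b, 0 < b → b < k + 2 →
      0 < isoM v b * isoN v (k+2) - isoM v (k+2) * isoN v b := by
    intro b hb1 hb2
    have h := hD (k+2) 0 b hb1 hb2 (le_refl _)
    rw [hsm, hsn] at h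
    linarith
  -- negation of v 0 and v last
  have hnv0 : -v 0 = v (Fin.last (k+2)) := by rw [hsym, neg_neg]
  -- Part 2 : cardinality
  have hfin : (Set.range v).Finite := Set.finite_range v
  have himg : Neg.neg '' Set.range v = -Set.range v := by
    ext x
    constructor
    · rintro ⟨p, hp, rfl⟩
      simpa using hp
    · intro hx
      exact ⟨-x, Set.mem_neg.1 hx, neg_neg x⟩
  have hfin2 : (-Set.range v).Finite := himg ▸ hfin.image _
  have hcA : (Set.range v).ncard = k + 3 := by
    rw [← Set.image_univ, Set.ncard_image_of_injective _ hvinj, Set.ncard_univ]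
    simp
  have hcB : (-Set.range v).ncard = k + 3 := by
    rw [← himg, Set.ncard_image_of_injective _ neg_injective, hcA]
  have hv0last : v 0 ≠ v (Fin.last (k+2)) := by
    intro h
    have h2 : (v 0).1 < (v (Fin.last (k+2))).1 := hmono (show (0 : Fin (k+3)) < Fin.last (k+2) by
      rw [Fin.lt_def]; simp)
    rw [h] at h2
    exact lt_irrefl _ h2
  have hinter : Set.range v ∩ -Set.range v = {v 0, v (Fin.last (k+2))} := by
    apply Set.Subset.antisymm
    · rintro x ⟨⟨i, rfl⟩, hx2⟩
      have hmem : -v i ∈ Set.range v := by simpa using hx2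
      obtain ⟨j, hj⟩ := hmem
      have hcoord1 : isoM v j.val = -isoM v i.val := by
        rw [isoM_fin, isoM_fin, hj]; simp
      have hcoord2 : isoN v j.val = -isoN v i.val := by
        rw [isoN_fin, isoN_fin, hj]; simp
      have hiK : i.val ≤ k + 2 := by omega
      have hjK : j.val ≤ k + 2 := by omega
      rcases Nat.lt_trichotomy i.val 0 with h | h | h
      · omega
      · have : i = 0 := Fin.ext (by simp [h])
        rw [this]
        exact Set.mem_insert _ _
      rcases Nat.eq_or_lt_of_le hiK with hiK' | hiK'
      · have : i = Fin.last (k+2) := Fin.ext (by simpa using hiK')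
        rw [this]
        exact Set.mem_insert_iff.2 (Or.inr rfl)
      -- interior i: contradiction
      exfalso
      have hFi := hF1 i.val h hiK'
      rcases Nat.lt_trichotomy j.val 0 with hj0 | hj0 | hj0
      · omega
      · have hj' : j = 0 := Fin.ext (by simp [hj0])
        rw [hj'] at hj
        have hvi : v i = v (Fin.last (k+2)) := by
          rw [← hnv0, hj]
          exact (neg_neg _).symm
        have heq := hvinj hvi
        rw [heq] at hiK'
        simp [Fin.val_last] at hiK'
      rcases Nat.eq_or_lt_of_le hjK with hjK' | hjK'
      · have hj' : j = Fin.last (k+2) := Fin.ext (by simpa using hjK')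
        rw [hj'] at hj
        have hvi : v i = v 0 := by
          rw [hsym, hj]
          exact (neg_neg _).symm
        have heq := hvinj hvi
        rw [heq] at h
        simp at h
      have hFj := hF1 j.val hj0 hjK'
      rw [hcoord1, hcoord2] at hFj
      linarith
    · rintro x (rfl | rfl)
      · exact ⟨⟨0, rfl⟩, Set.mem_neg.2 ⟨Fin.last (k+2), hnv0.symm⟩⟩
      · exact ⟨⟨Fin.last (k+2), rfl⟩, Set.mem_neg.2 ⟨0, hsym⟩⟩
  have hpart2 : (symSet v).ncard = 2 * k + 4 := by
    have hU := Set.ncard_union_add_ncard_inter (Set.range v) (-Set.range v) hfin hfin2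
    rw [hinter, Set.ncard_pair hv0last, hcA, hcB] at hU
    rw [hSdef, Set.ncard_image_of_injective _ hFinj]
    omega
  refine ⟨hpart1, hpart2, ?_⟩
  -- Part 3 : every point of S is an extreme point of its convex hull
  have hSfin : (symSet v).Finite := by
    rw [hSdef]; exact (hfin.union hfin2).image F
  have hcs1 : ∀ s : Fin (k+3), (((v s).1 : ℤ) : ℝ) = ((isoM v s.val : ℤ) : ℝ) := by
    intro s; rw [isoM_fin]
  have hcs2 : ∀ s : Fin (k+3), (((v s).2 : ℤ) : ℝ) = ((isoN v s.val : ℤ) : ℝ) := by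
    intro s; rw [isoN_fin]
  have hMK0 : 0 < isoM v (k+2) := by
    have h1 := hmono' 0 (k+2) (by omega) (le_refl _)
    omega
  have hsmR : ((isoM v 0 : ℤ) : ℝ) = -((isoM v (k+2) : ℤ) : ℝ) := by
    exact_mod_cast congrArg (fun z : ℤ => (z : ℝ)) hsm
  have hsnR : ((isoN v 0 : ℤ) : ℝ) = -((isoN v (k+2) : ℤ) : ℝ) := by
    exact_mod_cast congrArg (fun z : ℤ => (z : ℝ)) hsn
  have hexpose : ∀ i : Fin (k+3), ∃ l : (ℝ × ℝ) →ₗ[ℝ] ℝ,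
      ∀ y ∈ symSet v, y ≠ F (v i) → l y < l (F (v i)) := by
    intro i
    by_cases hiK : i.val = k + 2
    · -- rightmost vertex : expose with the first coordinate
      have hilast : i = Fin.last (k+2) := Fin.ext (by simpa using hiK)
      refine ⟨LinearMap.fst ℝ ℝ ℝ, ?_⟩
      rintro y ⟨u, hu, rfl⟩ hne
      simp only [LinearMap.fst_apply]
      rcases hu with ⟨s, rfl⟩ | hu
      · show (((v s).1 : ℤ) : ℝ) < (((v i).1 : ℤ) : ℝ)
        rw [hcs1 s, hcs1 i, hiK]
        by_cases hsK : s.val = k + 2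
        · exact absurd (by rw [show s = i from Fin.ext (by rw [hsK, hiK])]) hne
        · exact_mod_cast hmono' s.val (k+2) (by omega) (le_refl _)
      · obtain ⟨s, hs⟩ := Set.mem_neg.1 hu
        have hu' : u = -v s := by rw [hs, neg_neg]
        subst hu'
        show ((-(v s).1 : ℤ) : ℝ) < (((v i).1 : ℤ) : ℝ)
        rw [Int.cast_neg, hcs1 s, hcs1 i, hiK]
        by_cases hs0 : s.val = 0
        · exfalso
          apply hne
          have hs0' : s = 0 := Fin.ext (by simpa using hs0)
          rw [hs0', hnv0, ← hilast]
        · have h1 : -isoM v s.val < isoM v (k+2) := by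
            have h2 := hmono' 0 s.val (by omega) (by omega)
            omega
          push_cast
          exact_mod_cast h1
    · by_cases hi0 : i.val = 0
      · -- leftmost vertex : expose with minus the first coordinate
        have hi0' : i = 0 := Fin.ext (by simpa using hi0)
        refine ⟨-(LinearMap.fst ℝ ℝ ℝ), ?_⟩
        rintro y ⟨u, hu, rfl⟩ hne
        simp only [LinearMap.neg_apply, LinearMap.fst_apply, neg_lt_neg_iff]
        rcases hu with ⟨s, rfl⟩ | hu
        · show (((v i).1 : ℤ) : ℝ) < (((v s).1 : ℤ) : ℝ)
          rw [hcs1 s, hcs1 i, hi0]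
          by_cases hs0 : s.val = 0
          · exact absurd (by rw [show s = i from Fin.ext (by rw [hs0, hi0])]) hne
          · exact_mod_cast hmono' 0 s.val (by omega) (by omega)
        · obtain ⟨s, hs⟩ := Set.mem_neg.1 hu
          have hu' : u = -v s := by rw [hs, neg_neg]
          subst hu'
          show (((v i).1 : ℤ) : ℝ) < ((-(v s).1 : ℤ) : ℝ)
          rw [Int.cast_neg, hcs1 s, hcs1 i, hi0]
          by_cases hsK : s.val = k + 2
          · exfalso
            apply hne
            have hsK' : s = Fin.last (k+2) := Fin.ext (by simpa using hsK)
            rw [hsK', ← hsym, hi0']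
          · have h1 : isoM v 0 < -isoM v s.val := by
              have h2 := hmono' s.val (k+2) (by omega) (by omega)
              omega
            exact_mod_cast h1
      · -- interior vertex
        obtain ⟨c, hc⟩ : ∃ c, i.val = c + 1 := ⟨i.val - 1, by omega⟩
        have hcK : c + 2 ≤ k + 2 := by have := i.isLt; omega
        have d0Z := hmlt c (by omega)
        have d1Z : isoM v (c+1) < isoM v (c+2) := hmlt (c+1) (by omega)
        have d0 : (0:ℝ) < ((isoM v (c+1) : ℤ):ℝ) - ((isoM v c : ℤ):ℝ) := by
          have h' : ((isoM v c : ℤ):ℝ) < ((isoM v (c+1) : ℤ):ℝ) := by exact_mod_cast d0Z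
          linarith
        have d1 : (0:ℝ) < ((isoM v (c+2) : ℤ):ℝ) - ((isoM v (c+1) : ℤ):ℝ) := by
          have h' : ((isoM v (c+1) : ℤ):ℝ) < ((isoM v (c+2) : ℤ):ℝ) := by exact_mod_cast d1Z
          linarith
        set s0 : ℝ := (((isoN v (c+1) : ℤ):ℝ) - ((isoN v c : ℤ):ℝ)) /
            (((isoM v (c+1) : ℤ):ℝ) - ((isoM v c : ℤ):ℝ)) with hs0def
        set s1 : ℝ := (((isoN v (c+2) : ℤ):ℝ) - ((isoN v (c+1) : ℤ):ℝ)) /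
            (((isoM v (c+2) : ℤ):ℝ) - ((isoM v (c+1) : ℤ):ℝ)) with hs1def
        have hs01 : s0 < s1 := by
          rw [hs0def, hs1def, div_lt_div_iff₀ d0 d1]
          have hZ : (isoN v (c+1) - isoN v c) * (isoM v (c+2) - isoM v (c+1)) <
              (isoN v (c+2) - isoN v (c+1)) * (isoM v (c+1) - isoM v c) := by
            have h := hcr c hcK
            linarith
          have hZR : (((isoN v (c+1) : ℤ):ℝ) - ((isoN v c : ℤ):ℝ)) *
                (((isoM v (c+2) : ℤ):ℝ) - ((isoM v (c+1) : ℤ):ℝ)) <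
              (((isoN v (c+2) : ℤ):ℝ) - ((isoN v (c+1) : ℤ):ℝ)) *
                (((isoM v (c+1) : ℤ):ℝ) - ((isoM v c : ℤ):ℝ)) := by
            exact_mod_cast hZ
          linarith
        set lam : ℝ := (s0 + s1) / 2 with hlamdef
        have hlam0 : s0 < lam := by rw [hlamdef]; linarith
        have hlam1 : lam < s1 := by rw [hlamdef]; linarith
        refine ⟨lam • LinearMap.fst ℝ ℝ ℝ - LinearMap.snd ℝ ℝ ℝ, ?_⟩
        have happ : ∀ p : ℝ × ℝ,
            (lam • LinearMap.fst ℝ ℝ ℝ - LinearMap.snd ℝ ℝ ℝ) p = lam * p.1 - p.2 := by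
          intro p
          simp [smul_eq_mul]
        have hchain : ∀ s : ℕ, s ≤ k + 2 → s ≠ c + 1 →
            lam * ((isoM v s : ℤ):ℝ) - ((isoN v s : ℤ):ℝ) <
              lam * ((isoM v (c+1) : ℤ):ℝ) - ((isoN v (c+1) : ℤ):ℝ) := by
          intro s hs hsne
          rcases Nat.lt_trichotomy s (c+1) with hlt | heqq | hgt
          · have hZ : 0 ≤ (isoM v (c+1) - isoM v s) * (isoN v (c+1) - isoN v c) -
                (isoN v (c+1) - isoN v s) * (isoM v (c+1) - isoM v c) := by
              have h := isoC2 (k+2) (isoM v) (isoN v) hmlt hcr (c - s) s (by omega)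
              have e : s + (c - s) = c := by omega
              rw [e] at h
              exact h
            have hMs : (0:ℝ) < ((isoM v (c+1) : ℤ):ℝ) - ((isoM v s : ℤ):ℝ) := by
              have h2 := hmono' s (c+1) hlt (by omega)
              have h2' : ((isoM v s : ℤ):ℝ) < ((isoM v (c+1) : ℤ):ℝ) := by exact_mod_cast h2
              linarith
            have hZ' : (isoN v (c+1) - isoN v s) * (isoM v (c+1) - isoM v c) ≤
                (isoM v (c+1) - isoM v s) * (isoN v (c+1) - isoN v c) := by linarith
            have hZR : (((isoN v (c+1) : ℤ):ℝ) - ((isoN v s : ℤ):ℝ)) *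
                  (((isoM v (c+1) : ℤ):ℝ) - ((isoM v c : ℤ):ℝ)) ≤
                (((isoM v (c+1) : ℤ):ℝ) - ((isoM v s : ℤ):ℝ)) *
                  (((isoN v (c+1) : ℤ):ℝ) - ((isoN v c : ℤ):ℝ)) := by
              exact_mod_cast hZ'
            have h2 : ((isoN v (c+1) : ℤ):ℝ) - ((isoN v s : ℤ):ℝ) ≤
                s0 * (((isoM v (c+1) : ℤ):ℝ) - ((isoM v s : ℤ):ℝ)) := by
              rw [hs0def, div_mul_eq_mul_div, le_div_iff₀ d0]
              linarith
            have h3 := mul_lt_mul_of_pos_right hlam0 hMs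
            linarith
          · exact absurd heqq hsne
          · have hZ : 0 ≤ (isoM v (c+2) - isoM v (c+1)) * (isoN v s - isoN v (c+1)) -
                (isoN v (c+2) - isoN v (c+1)) * (isoM v s - isoM v (c+1)) :=
              isoC1 (k+2) (isoM v) (isoN v) hmlt hcr s (c+1) hgt hs
            have hMs : (0:ℝ) < ((isoM v s : ℤ):ℝ) - ((isoM v (c+1) : ℤ):ℝ) := by
              have h2 := hmono' (c+1) s hgt hs
              have h2' : ((isoM v (c+1) : ℤ):ℝ) < ((isoM v s : ℤ):ℝ) := by exact_mod_cast h2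
              linarith
            have hZ' : (isoN v (c+2) - isoN v (c+1)) * (isoM v s - isoM v (c+1)) ≤
                (isoM v (c+2) - isoM v (c+1)) * (isoN v s - isoN v (c+1)) := by linarith
            have hZR : (((isoN v (c+2) : ℤ):ℝ) - ((isoN v (c+1) : ℤ):ℝ)) *
                  (((isoM v s : ℤ):ℝ) - ((isoM v (c+1) : ℤ):ℝ)) ≤
                (((isoM v (c+2) : ℤ):ℝ) - ((isoM v (c+1) : ℤ):ℝ)) *
                  (((isoN v s : ℤ):ℝ) - ((isoN v (c+1) : ℤ):ℝ)) := by
              exact_mod_cast hZ'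
            have h2 : s1 * (((isoM v s : ℤ):ℝ) - ((isoM v (c+1) : ℤ):ℝ)) ≤
                ((isoN v s : ℤ):ℝ) - ((isoN v (c+1) : ℤ):ℝ) := by
              rw [hs1def, div_mul_eq_mul_div, div_le_iff₀ d1]
              linarith
            have h3 := mul_lt_mul_of_pos_right hlam1 hMs
            linarith
        rintro y ⟨u, hu, rfl⟩ hne
        simp only [happ]
        rcases hu with ⟨s, rfl⟩ | hu
        · show lam * (((v s).1 : ℤ):ℝ) - (((v s).2 : ℤ):ℝ) <
            lam * (((v i).1 : ℤ):ℝ) - (((v i).2 : ℤ):ℝ)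
          rw [hcs1 s, hcs2 s, hcs1 i, hcs2 i, hc]
          refine hchain s.val (by omega) ?_
          intro hsc
          exact hne (by rw [show s = i from Fin.ext (by rw [hsc, hc])])
        · obtain ⟨s, hs⟩ := Set.mem_neg.1 hu
          have hu' : u = -v s := by rw [hs, neg_neg]
          subst hu'
          show lam * ((-(v s).1 : ℤ):ℝ) - ((-(v s).2 : ℤ):ℝ) <
            lam * (((v i).1 : ℤ):ℝ) - (((v i).2 : ℤ):ℝ)
          rw [Int.cast_neg, Int.cast_neg, hcs1 s, hcs2 s, hcs1 i, hcs2 i, hc]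
          by_cases hsz : s.val = 0
          · rw [hsz, hsmR, hsnR]
            have h := hchain (k+2) (le_refl _) (by omega)
            linarith
          · by_cases hsK : s.val = k + 2
            · rw [hsK]
              have h := hchain 0 (by omega) (by omega)
              rw [hsmR, hsnR] at h
              linarith
            · have hG0 := hchain 0 (by omega) (by omega)
              rw [hsmR, hsnR] at hG0
              have hGK := hchain (k+2) (le_refl _) (by omega)
              have hFs := hF1 s.val (by omega) (by omega)
              have hFsR : (0:ℝ) < ((isoM v s.val : ℤ):ℝ) * ((isoN v (k+2) : ℤ):ℝ) -
                  ((isoM v (k+2) : ℤ):ℝ) * ((isoN v s.val : ℤ):ℝ) := by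
                exact_mod_cast hFs
              have hplusR : (0:ℝ) < ((isoM v (k+2) : ℤ):ℝ) + ((isoM v s.val : ℤ):ℝ) := by
                have h2 := hmono' 0 s.val (by omega) (by omega)
                have h2R : ((isoM v 0 : ℤ):ℝ) < ((isoM v s.val : ℤ):ℝ) := by exact_mod_cast h2
                rw [hsmR] at h2R
                linarith
              have hminusR : (0:ℝ) < ((isoM v (k+2) : ℤ):ℝ) - ((isoM v s.val : ℤ):ℝ) := by
                have h2 := hmono' s.val (k+2) (by omega) (le_refl _)
                have h2R : ((isoM v s.val : ℤ):ℝ) < ((isoM v (k+2) : ℤ):ℝ) := by exact_mod_cast h2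
                linarith
              have hMKR : (0:ℝ) < ((isoM v (k+2) : ℤ):ℝ) := by exact_mod_cast hMK0
              have t1 : 0 < (((isoM v (k+2) : ℤ):ℝ) + ((isoM v s.val : ℤ):ℝ)) *
                  ((lam * ((isoM v (c+1) : ℤ):ℝ) - ((isoN v (c+1) : ℤ):ℝ)) -
                    (lam * (-((isoM v (k+2) : ℤ):ℝ)) - (-((isoN v (k+2) : ℤ):ℝ)))) :=
                mul_pos hplusR (by linarith)
              have t2 : 0 < (((isoM v (k+2) : ℤ):ℝ) - ((isoM v s.val : ℤ):ℝ)) *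
                  ((lam * ((isoM v (c+1) : ℤ):ℝ) - ((isoN v (c+1) : ℤ):ℝ)) -
                    (lam * ((isoM v (k+2) : ℤ):ℝ) - ((isoN v (k+2) : ℤ):ℝ))) :=
                mul_pos hminusR (by linarith)
              have key : 0 < 2 * ((isoM v (k+2) : ℤ):ℝ) *
                  ((lam * ((isoM v (c+1) : ℤ):ℝ) - ((isoN v (c+1) : ℤ):ℝ)) -
                    (lam * (-((isoM v s.val : ℤ):ℝ)) - (-((isoN v s.val : ℤ):ℝ)))) := by
                linarith [t1, t2, hFsR]
              have h2MK : (0:ℝ) < 2 * ((isoM v (k+2) : ℤ):ℝ) := by linarith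
              by_contra hcon
              push_neg at hcon
              have hT : (lam * ((isoM v (c+1) : ℤ):ℝ) - ((isoN v (c+1) : ℤ):ℝ)) -
                  (lam * (-((isoM v s.val : ℤ):ℝ)) - (-((isoN v s.val : ℤ):ℝ))) ≤ 0 := by
                linarith
              have h5 : 2 * ((isoM v (k+2) : ℤ):ℝ) *
                  ((lam * ((isoM v (c+1) : ℤ):ℝ) - ((isoN v (c+1) : ℤ):ℝ)) -
                    (lam * (-((isoM v s.val : ℤ):ℝ)) - (-((isoN v s.val : ℤ):ℝ)))) ≤ 0 :=
                mul_nonpos_iff.2 (Or.inl ⟨h2MK.le, hT⟩)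
              linarith [key, h5]
  -- assemble
  rintro x ⟨u, hu, rfl⟩
  have hmemx : F u ∈ symSet v := ⟨u, hu, rfl⟩
  rcases hu with ⟨t, rfl⟩ | hu2
  · obtain ⟨l, hl⟩ := hexpose t
    exact expose_extreme hSfin hmemx l hl
  · obtain ⟨t, ht⟩ := Set.mem_neg.1 hu2
    have hu' : u = -v t := by rw [ht, neg_neg]
    obtain ⟨l, hl⟩ := hexpose t
    have hFu : F u = -F (v t) := by rw [hu', hFneg]
    have hl' : ∀ y ∈ symSet v, y ≠ F u → (-l) y < (-l) (F u) := by
      intro y hy hney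
      have h1 : -y ∈ symSet v := by
        rw [hpart1]
        simpa using hy
      have h2 : -y ≠ F (v t) := by
        intro hcon
        apply hney
        rw [← neg_neg y, hcon, hFu]
      have h3 := hl (-y) h1 h2
      simp only [LinearMap.neg_apply, map_neg, hFu] at *
      linarith
    exact expose_extreme hSfin hmemx (-l) hl'
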